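/- Let X^n, Y^n be sequences of discrete random variables where X_1,...,X_n are i.i.d. Then (1/n) I(X^n;Y^n) ≥ (1/n) Σ_{t=1}^n I(X_t;Y_t). -/

import Mathlib

open Finset Real

noncomputable section

/-- `w` is a probability mass function on the finite sample space `Ω`. -/
def IsPMF {Ω : Type*} [Fintype Ω] (w : Ω → ℝ) : Prop :=
  (∀ ω, 0 ≤ w ω) ∧ ∑ ω, w ω = 1

/-- Distribution (pmf) of the random variable `X` under the weight `w`. -/
def rvDist {Ω A : Type*} [Fintype Ω] [DecidableEq A] (w : Ω → ℝ) (X : Ω → A) (a : A) : ℝ :=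
  ∑ ω, if X ω = a then w ω else 0

/-- Shannon entropy (in bits) of `X` under `w`. -/
def Hent {Ω A : Type*} [Fintype Ω] [Fintype A] [DecidableEq A] (w : Ω → ℝ) (X : Ω → A) : ℝ :=
  -∑ a, rvDist w X a * Real.logb 2 (rvDist w X a)

/-- Conditional entropy `H(X | Z)` (in bits). -/
def Hcond {Ω A C : Type*} [Fintype Ω] [Fintype A] [Fintype C] [DecidableEq A] [DecidableEq C]
    (w : Ω → ℝ) (X : Ω → A) (Z : Ω → C) : ℝ :=
  Hent w (fun ω => (X ω, Z ω)) - Hent w Z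

/-- Mutual information `I(X;Y)` (in bits). -/
def MI {Ω A B : Type*} [Fintype Ω] [Fintype A] [Fintype B] [DecidableEq A] [DecidableEq B]
    (w : Ω → ℝ) (X : Ω → A) (Y : Ω → B) : ℝ :=
  Hent w X + Hent w Y - Hent w (fun ω => (X ω, Y ω))

/-- Conditional mutual information `I(X;Y|E)` (in bits). -/
def CMI {Ω A B C : Type*} [Fintype Ω] [Fintype A] [Fintype B] [Fintype C]
    [DecidableEq A] [DecidableEq B] [DecidableEq C]
    (w : Ω → ℝ) (X : Ω → A) (Y : Ω → B) (E : Ω → C) : ℝ :=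
  Hent w (fun ω => (X ω, E ω)) + Hent w (fun ω => (Y ω, E ω))
    - Hent w (fun ω => (X ω, Y ω, E ω)) - Hent w E

/-- `X` and `E` are independent under `w`. -/
def IndepRV {Ω A C : Type*} [Fintype Ω] [DecidableEq A] [DecidableEq C]
    (w : Ω → ℝ) (X : Ω → A) (E : Ω → C) : Prop :=
  ∀ a c, rvDist w (fun ω => (X ω, E ω)) (a, c) = rvDist w X a * rvDist w E c

/-- The family `X` is i.i.d. under `w`: the joint pmf factorizes into the (common) marginals. -/
def IIDFamily {Ω A : Type*} [Fintype Ω] [DecidableEq A] {n : ℕ}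
    (w : Ω → ℝ) (X : Fin n → Ω → A) : Prop :=
  (∀ v : Fin n → A, rvDist w (fun ω t => X t ω) v = ∏ t, rvDist w (X t) (v t)) ∧
  (∀ s t, rvDist w (X s) = rvDist w (X t))


section helpers
variable {Ω : Type*} [Fintype Ω] {w : Ω → ℝ}

lemma rvDist_nn {A : Type*} [DecidableEq A] (hw : ∀ ω, 0 ≤ w ω) (Z : Ω → A) (a : A) :
    0 ≤ rvDist w Z a :=
  Finset.sum_nonneg fun ω _ => by split <;> simp [hw ω]

lemma sum_rvDist {A : Type*} [Fintype A] [DecidableEq A] (hw : IsPMF w) (Z : Ω → A) :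
    ∑ a, rvDist w Z a = 1 := by
  unfold rvDist
  rw [Finset.sum_comm]
  simp [Finset.sum_ite_eq, hw.2]

lemma apply_le_rvDist {A : Type*} [DecidableEq A] (hw : ∀ ω, 0 ≤ w ω) (Z : Ω → A) (ω : Ω) :
    w ω ≤ rvDist w Z (Z ω) := by
  have := Finset.single_le_sum (f := fun ω' => if Z ω' = Z ω then w ω' else 0)
    (fun ω' _ => by split <;> simp [hw ω']) (Finset.mem_univ ω)
  simpa [rvDist] using this

lemma rvDist_comp_le {A C : Type*} [DecidableEq A] [DecidableEq C] (hw : ∀ ω, 0 ≤ w ω)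
    (W : Ω → A) (g : A → C) (s : A) :
    rvDist w W s ≤ rvDist w (fun ω => g (W ω)) (g s) := by
  refine Finset.sum_le_sum fun ω _ => ?_
  by_cases h : W ω = s
  · simp [h]
  · simp only [h, if_false]
    split <;> simp [hw ω]

lemma Hent_eq {A : Type*} [Fintype A] [DecidableEq A] (Z : Ω → A) :
    Hent w Z = -∑ ω, w ω * Real.logb 2 (rvDist w Z (Z ω)) := by
  unfold Hent
  congr 1
  have : ∀ a, rvDist w Z a * Real.logb 2 (rvDist w Z a)
      = ∑ ω, if Z ω = a then w ω * Real.logb 2 (rvDist w Z a) else 0 := by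
    intro a
    rw [rvDist, Finset.sum_mul]
    exact Finset.sum_congr rfl fun ω _ => by split <;> simp
  simp_rw [this]
  rw [Finset.sum_comm]
  refine Finset.sum_congr rfl fun ω _ => ?_
  simp [Finset.sum_ite_eq, eq_comm]

lemma sum_group {A : Type*} [Fintype A] [DecidableEq A] (S : Ω → A) (F : A → ℝ) :
    ∑ ω, w ω * F (S ω) = ∑ s, rvDist w S s * F s := by
  have : ∀ s, rvDist w S s * F s = ∑ ω, if S ω = s then w ω * F s else 0 := by
    intro s
    rw [rvDist, Finset.sum_mul]
    exact Finset.sum_congr rfl fun ω _ => by split <;> simp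
  simp_rw [this]
  rw [Finset.sum_comm]
  refine Finset.sum_congr rfl fun ω _ => ?_
  simp [Finset.sum_ite_eq, eq_comm]

lemma marginal_snd {A C : Type*} [Fintype A] [DecidableEq A] [DecidableEq C]
    (X : Ω → A) (Z : Ω → C) (c : C) :
    ∑ a, rvDist w (fun ω => (X ω, Z ω)) (a, c) = rvDist w Z c := by
  unfold rvDist
  rw [Finset.sum_comm]
  refine Finset.sum_congr rfl fun ω _ => ?_
  by_cases h : Z ω = c
  · simp [h, Prod.ext_iff, Finset.sum_ite_eq]
  · simp [Prod.ext_iff, h]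

lemma gibbs_point {p Q : ℝ} (hp : 0 < p) (hQ : 0 < Q) :
    p * (Real.logb 2 Q - Real.logb 2 p) ≤ (Q - p) / Real.log 2 := by
  have h2 : 0 < Real.log 2 := Real.log_pos one_lt_two
  have hlog : Real.log Q - Real.log p ≤ Q / p - 1 := by
    have := Real.log_le_sub_one_of_pos (div_pos hQ hp)
    rwa [Real.log_div hQ.ne' hp.ne'] at this
  have key : p * (Real.log Q - Real.log p) ≤ Q - p := by
    calc p * (Real.log Q - Real.log p) ≤ p * (Q / p - 1) :=
          mul_le_mul_of_nonneg_left hlog hp.le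
      _ = Q - p := by field_simp
  rw [Real.logb, Real.logb, ← sub_div, ← mul_div_assoc]
  exact (div_le_div_iff_of_pos_right h2).mpr key

end helpers


section aux
variable {Ω A B : Type*} [Fintype Ω] [Fintype A] [Fintype B]
  [DecidableEq A] [DecidableEq B] {n : ℕ}

lemma main_ineq (w : Ω → ℝ) (hw : IsPMF w) (X : Fin n → Ω → A) (Y : Fin n → Ω → B)
    (hX : (∀ v : Fin n → A, rvDist w (fun ω t => X t ω) v = ∏ t, rvDist w (X t) (v t))) :
    ∑ t, MI w (X t) (Y t) ≤ MI w (fun ω (t : Fin n) => X t ω) (fun ω (t : Fin n) => Y t ω) := by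
  classical
  have hwn := hw.1
  set Xv : Ω → Fin n → A := fun ω t => X t ω with hXvdef
  set Yv : Ω → Fin n → B := fun ω t => Y t ω with hYvdef
  set S : Ω → (Fin n → A) × (Fin n → B) := fun ω => (Xv ω, Yv ω) with hSdef
  set p : (Fin n → A) × (Fin n → B) → ℝ := rvDist w S with hpdef
  set G : (Fin n → A) × (Fin n → B) → ℝ := fun s =>
      Real.logb 2 (p s) + ∑ t, Real.logb 2 (rvDist w (Y t) (s.2 t))
        - Real.logb 2 (rvDist w Yv s.2)
        - ∑ t, Real.logb 2 (rvDist w (fun ω => (X t ω, Y t ω)) (s.1 t, s.2 t)) with hGdef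
  -- Step A : MI joint - ∑ MI = ∑ s, p s * G s
  have hA : MI w Xv Yv - ∑ t, MI w (X t) (Y t) = ∑ s, p s * G s := by
    have hMIj : MI w Xv Yv = ∑ ω, w ω * (Real.logb 2 (p (S ω))
        - Real.logb 2 (rvDist w Xv (Xv ω)) - Real.logb 2 (rvDist w Yv (Yv ω))) := by
      have h1 : Hent w (fun ω => (Xv ω, Yv ω)) = -∑ ω, w ω * Real.logb 2 (p (S ω)) :=
        Hent_eq S
      rw [MI, Hent_eq Xv, Hent_eq Yv, h1]
      simp only [mul_sub, Finset.sum_sub_distrib]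
      ring
    have hMIt : ∑ t, MI w (X t) (Y t) = ∑ ω, w ω *
        ∑ t, (Real.logb 2 (rvDist w (fun ω => (X t ω, Y t ω)) (X t ω, Y t ω))
          - Real.logb 2 (rvDist w (X t) (X t ω)) - Real.logb 2 (rvDist w (Y t) (Y t ω))) := by
      have hMI1 : ∀ t, MI w (X t) (Y t) = ∑ ω, w ω *
          (Real.logb 2 (rvDist w (fun ω => (X t ω, Y t ω)) (X t ω, Y t ω))
            - Real.logb 2 (rvDist w (X t) (X t ω)) - Real.logb 2 (rvDist w (Y t) (Y t ω))) := by
        intro t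
        rw [MI, Hent_eq (X t), Hent_eq (Y t), Hent_eq (fun ω => (X t ω, Y t ω))]
        simp only [mul_sub, Finset.sum_sub_distrib]
        ring
      simp_rw [hMI1]
      rw [Finset.sum_comm]
      refine Finset.sum_congr rfl fun ω _ => ?_
      rw [← Finset.mul_sum, Finset.sum_sub_distrib, Finset.sum_sub_distrib]
    have hpt : ∀ ω, w ω * (Real.logb 2 (p (S ω))
          - Real.logb 2 (rvDist w Xv (Xv ω)) - Real.logb 2 (rvDist w Yv (Yv ω)))
        - w ω * ∑ t, (Real.logb 2 (rvDist w (fun ω => (X t ω, Y t ω)) (X t ω, Y t ω))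
          - Real.logb 2 (rvDist w (X t) (X t ω)) - Real.logb 2 (rvDist w (Y t) (Y t ω)))
        = w ω * G (S ω) := by
      intro ω
      rcases eq_or_lt_of_le (hwn ω) with h0 | hpos
      · simp [← h0]
      · have hbpos : ∀ t, 0 < rvDist w (X t) (X t ω) :=
          fun t => lt_of_lt_of_le hpos (apply_le_rvDist hwn (X t) ω)
        have hfac : Real.logb 2 (rvDist w Xv (Xv ω))
            = ∑ t, Real.logb 2 (rvDist w (X t) (X t ω)) := by
          rw [show rvDist w Xv (Xv ω) = ∏ t, rvDist w (X t) (X t ω) from hX (Xv ω)]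
          exact Real.logb_prod _ _ (fun t _ => (hbpos t).ne')
        have hexp : G (S ω) = Real.logb 2 (p (S ω))
            + ∑ t, Real.logb 2 (rvDist w (Y t) (Y t ω))
            - Real.logb 2 (rvDist w Yv (Yv ω))
            - ∑ t, Real.logb 2 (rvDist w (fun ω => (X t ω, Y t ω)) (X t ω, Y t ω)) := rfl
        rw [hexp, hfac, Finset.sum_sub_distrib, Finset.sum_sub_distrib]
        ring
    rw [hMIj, hMIt, ← Finset.sum_sub_distrib]
    simp_rw [hpt]
    exact sum_group S G
  -- Step B : 0 ≤ ∑ s, p s * G s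
  have hB : 0 ≤ ∑ s, p s * G s := by
    set Q : (Fin n → A) × (Fin n → B) → ℝ := fun s =>
      rvDist w Yv s.2 * ∏ t,
        (rvDist w (fun ω => (X t ω, Y t ω)) (s.1 t, s.2 t) / rvDist w (Y t) (s.2 t)) with hQdef
    have hQnn : ∀ s, 0 ≤ Q s := fun s =>
      mul_nonneg (rvDist_nn hwn Yv _) (Finset.prod_nonneg fun t _ =>
        div_nonneg (rvDist_nn hwn _ _) (rvDist_nn hwn _ _))
    have hpY : ∀ s : (Fin n → A) × (Fin n → B), p s ≤ rvDist w Yv s.2 :=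
      fun s => rvDist_comp_le hwn S Prod.snd s
    have hpXY : ∀ (s : (Fin n → A) × (Fin n → B)) t,
        p s ≤ rvDist w (fun ω => (X t ω, Y t ω)) (s.1 t, s.2 t) :=
      fun s t => rvDist_comp_le hwn S (fun s => (s.1 t, s.2 t)) s
    have hpYt : ∀ (s : (Fin n → A) × (Fin n → B)) t, p s ≤ rvDist w (Y t) (s.2 t) :=
      fun s t => rvDist_comp_le hwn S (fun s => s.2 t) s
    have hYtY : ∀ (y : Fin n → B) t, rvDist w Yv y ≤ rvDist w (Y t) (y t) :=
      fun y t => rvDist_comp_le hwn Yv (fun y => y t) y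
    have hlog2 : 0 < Real.log 2 := Real.log_pos one_lt_two
    -- pointwise bound on the support
    have hpoint : ∀ s, 0 < p s → (p s - Q s) / Real.log 2 ≤ p s * G s := by
      intro s hps
      have hY' : 0 < rvDist w Yv s.2 := lt_of_lt_of_le hps (hpY s)
      have hXY' : ∀ t, 0 < rvDist w (fun ω => (X t ω, Y t ω)) (s.1 t, s.2 t) :=
        fun t => lt_of_lt_of_le hps (hpXY s t)
      have hYt' : ∀ t, 0 < rvDist w (Y t) (s.2 t) := fun t => lt_of_lt_of_le hps (hpYt s t)
      have hQpos : 0 < Q s := mul_pos hY' (Finset.prod_pos fun t _ => div_pos (hXY' t) (hYt' t))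
      have hlogQ : Real.logb 2 (Q s) = Real.logb 2 (rvDist w Yv s.2)
          + ∑ t, (Real.logb 2 (rvDist w (fun ω => (X t ω, Y t ω)) (s.1 t, s.2 t))
              - Real.logb 2 (rvDist w (Y t) (s.2 t))) := by
        rw [hQdef]
        rw [Real.logb_mul hY'.ne' (Finset.prod_pos fun t _ => div_pos (hXY' t) (hYt' t)).ne',
          Real.logb_prod _ _ (fun t _ => (div_pos (hXY' t) (hYt' t)).ne')]
        congr 1
        exact Finset.sum_congr rfl fun t _ => Real.logb_div (hXY' t).ne' (hYt' t).ne'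
      have hGs : G s = -(Real.logb 2 (Q s) - Real.logb 2 (p s)) := by
        rw [hlogQ, hGdef]
        simp only [Finset.sum_sub_distrib]
        ring
      have := gibbs_point hps hQpos
      rw [hGs, mul_neg]
      have h' : (p s - Q s) / Real.log 2 = -((Q s - p s) / Real.log 2) := by ring
      rw [h']
      exact neg_le_neg this
    -- restrict to the support
    set supp := Finset.univ.filter (fun s => 0 < p s) with hsupp
    have hzero : ∀ s, s ∉ supp → p s = 0 := by
      intro s hs
      rw [hsupp] at hs
      simp only [Finset.mem_filter, Finset.mem_univ, true_and, not_lt] at hs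
      exact le_antisymm hs (rvDist_nn hwn S s)
    have hres : ∑ s, p s * G s = ∑ s ∈ supp, p s * G s := by
      symm
      refine Finset.sum_subset (Finset.subset_univ _) ?_
      intro s _ hs
      rw [hzero s hs, zero_mul]
    have hsum_p : ∑ s ∈ supp, p s = 1 := by
      rw [Finset.sum_subset (Finset.subset_univ supp) (fun s _ hs => hzero s hs)]
      exact sum_rvDist hw S
    -- sum of Q over support is at most 1
    have hsumQ : ∑ s ∈ supp, Q s ≤ 1 := by
      have hsub : supp ⊆ Finset.univ.filter (fun s => 0 < rvDist w Yv s.2) := by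
        intro s hs
        rw [hsupp] at hs
        simp only [Finset.mem_filter, Finset.mem_univ, true_and] at hs ⊢
        exact lt_of_lt_of_le hs (hpY s)
      refine le_trans (Finset.sum_le_sum_of_subset_of_nonneg hsub
        (fun s _ _ => hQnn s)) ?_
      rw [Finset.sum_filter]
      rw [Fintype.sum_prod_type_right]
      have hinner : ∀ y : Fin n → B,
          (∑ x : Fin n → A, if 0 < rvDist w Yv y then Q (x, y) else 0)
            = if 0 < rvDist w Yv y then rvDist w Yv y else 0 := by
        intro y
        by_cases hy : 0 < rvDist w Yv y
        · simp only [hy, if_true]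
          have hYt'' : ∀ t, 0 < rvDist w (Y t) (y t) :=
            fun t => lt_of_lt_of_le hy (hYtY y t)
          rw [hQdef]
          simp only
          rw [← Finset.mul_sum]
          have hps : (∑ i : Fin n → A, ∏ t : Fin n,
                rvDist w (fun ω => (X t ω, Y t ω)) (i t, y t) / rvDist w (Y t) (y t))
              = ∏ t : Fin n, ∑ a : A,
                rvDist w (fun ω => (X t ω, Y t ω)) (a, y t) / rvDist w (Y t) (y t) :=
            (Fintype.prod_sum (κ := fun _ : Fin n => A)
              (fun t a => rvDist w (fun ω => (X t ω, Y t ω)) (a, y t) / rvDist w (Y t) (y t))).symm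
          rw [hps]
          have hone : ∀ t : Fin n,
              (∑ a : A, rvDist w (fun ω => (X t ω, Y t ω)) (a, y t) / rvDist w (Y t) (y t)) = 1 := by
            intro t
            rw [← Finset.sum_div, marginal_snd (X t) (Y t) (y t),
              div_self (hYt'' t).ne']
          rw [Finset.prod_congr rfl (fun t _ => hone t), Finset.prod_const_one, mul_one]
        · simp [hy]
      rw [Finset.sum_congr rfl (fun y _ => hinner y)]
      calc (∑ y : Fin n → B, if 0 < rvDist w Yv y then rvDist w Yv y else 0)
          ≤ ∑ y : Fin n → B, rvDist w Yv y := by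
            refine Finset.sum_le_sum fun y _ => ?_
            split
            · exact le_rfl
            · exact rvDist_nn hwn Yv y
        _ = 1 := sum_rvDist hw Yv
    have h1 : (∑ s ∈ supp, p s - ∑ s ∈ supp, Q s) / Real.log 2 ≤ ∑ s ∈ supp, p s * G s := by
      rw [← Finset.sum_sub_distrib, Finset.sum_div]
      exact Finset.sum_le_sum fun s hs => hpoint s (by
        rw [hsupp] at hs
        simpa using hs)
    have h2 : 0 ≤ (∑ s ∈ supp, p s - ∑ s ∈ supp, Q s) / Real.log 2 := by
      apply div_nonneg _ hlog2.le
      rw [hsum_p]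
      linarith [hsumQ]
    rw [hres]
    linarith
  linarith
end aux

/-- if `X_1,…,X_n` are i.i.d., then
`(1/n) I(X^n;Y^n) ≥ (1/n) ∑_t I(X_t;Y_t)`. -/
theorem single_letterization {Ω A B : Type*} [Fintype Ω] [Fintype A] [Fintype B]
    [DecidableEq A] [DecidableEq B] {n : ℕ}
    (w : Ω → ℝ) (hw : IsPMF w) (X : Fin n → Ω → A) (Y : Fin n → Ω → B)
    (hX : IIDFamily w X) :
    (1 / (n : ℝ)) * ∑ t, MI w (X t) (Y t) ≤
      (1 / (n : ℝ)) * MI w (fun ω (t : Fin n) => X t ω) (fun ω (t : Fin n) => Y t ω) := by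
  have h := main_ineq w hw X Y hX.1
  have hn : (0:ℝ) ≤ 1 / (n : ℝ) := by positivity
  exact mul_le_mul_of_nonneg_left h hn
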